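/- The Lobachevsky function Λ(x) = -∫₀ˣ log|2 sin t| dt attains its maximum over [0, π] at x = π/6, i.e. Λ(x) ≤ Λ(π/6) for all x ∈ [0, π]. -/

import Mathlib

open Real MeasureTheory Set intervalIntegral

/-- The Lobachevsky function `Λ(x) = -∫₀ˣ log|2 sin t| dt`. -/
noncomputable def lobachevsky (x : ℝ) : ℝ := -∫ t in (0:ℝ)..x, Real.log |2 * Real.sin t|

namespace LobachevskyAux

lemma sin_lower {t : ℝ} (ht : t ∈ Set.Ioo 0 π) :
    2 / π ^ 2 * (t * (π - t)) ≤ Real.sin t := by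
  have hpi : 0 < π := Real.pi_pos
  rcases le_total t (π / 2) with h | h
  · have h1 : 2 / π * t ≤ Real.sin t := Real.mul_le_sin ht.1.le h
    calc 2 / π ^ 2 * (t * (π - t)) ≤ 2 / π ^ 2 * (t * π) := by
          apply mul_le_mul_of_nonneg_left _ (by positivity)
          nlinarith [ht.1.le]
      _ = 2 / π * t := by field_simp
      _ ≤ Real.sin t := h1
  · have h0 : 0 ≤ π - t := by linarith [ht.2.le]
    have h1 : 2 / π * (π - t) ≤ Real.sin (π - t) := Real.mul_le_sin h0 (by linarith)
    rw [Real.sin_pi_sub] at h1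
    calc 2 / π ^ 2 * (t * (π - t)) ≤ 2 / π ^ 2 * (π * (π - t)) := by
          apply mul_le_mul_of_nonneg_left _ (by positivity)
          nlinarith [ht.2.le]
      _ = 2 / π * (π - t) := by field_simp
      _ ≤ Real.sin t := h1

lemma integrableOn_log_Ioo : IntegrableOn Real.log (Set.Ioo 0 π) volume := by
  have hpi : (1:ℝ) < π := by linarith [Real.pi_gt_three]
  have h1 : IntegrableOn (fun t => -Real.log t) (Set.Ioc 0 1) volume := by
    apply integrableOn_deriv_of_nonneg (g := fun t => t - t * Real.log t)
    · exact (continuous_id.sub Real.continuous_mul_log).continuousOn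
    · intro x hx
      have h := (hasDerivAt_id x).sub (Real.hasDerivAt_mul_log (ne_of_gt hx.1))
      convert h using 1 <;> first | rfl | ring
    · intro x hx
      exact neg_nonneg.mpr (Real.log_nonpos hx.1.le hx.2.le)
  have h2 : IntegrableOn Real.log (Set.Ioc 0 1) volume := by
    have h := h1.neg
    simp only [Pi.neg_def, neg_neg] at h
    exact h
  have h3 : IntegrableOn Real.log (Set.Icc 1 π) volume := by
    apply ContinuousOn.integrableOn_Icc
    apply Real.continuousOn_log.mono
    intro x hx
    simp only [Set.mem_compl_iff, Set.mem_singleton_iff]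
    intro h; rw [h] at hx; exact absurd hx.1 (by norm_num)
  refine (h2.union h3).mono_set ?_
  intro x hx
  rcases le_total x 1 with h | h
  · exact Or.inl ⟨hx.1, h⟩
  · exact Or.inr ⟨h, hx.2.le⟩

lemma integrableOn_log_pi_sub : IntegrableOn (fun t => Real.log (π - t)) (Set.Ioo 0 π) volume := by
  have hpi : (1:ℝ) < π := by linarith [Real.pi_gt_three]
  have h1 : IntegrableOn (fun t => -Real.log (π - t)) (Set.Ioc (π - 1) π) volume := by
    apply integrableOn_deriv_of_nonneg
      (g := fun t => (π - t) * Real.log (π - t) - (π - t))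
    · exact ((Real.continuous_mul_log.comp (continuous_const.sub continuous_id)).sub
        (continuous_const.sub continuous_id)).continuousOn
    · intro x hx
      have hne : π - x ≠ 0 := by
        have := hx.2; intro hc; linarith [sub_eq_zero.mp hc]
      have h0 : HasDerivAt (fun t : ℝ => π - t) (-1) x := (hasDerivAt_id x).const_sub π
      have hd : HasDerivAt (fun t : ℝ => (π - t) * Real.log (π - t))
          ((Real.log (π - x) + 1) * (-1)) x := by
        have h := (Real.hasDerivAt_mul_log hne).comp x h0
        convert h using 1 <;> first | rfl | ring
      have hd2 := hd.sub h0
      convert hd2 using 1 <;> first | rfl | ring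
    · intro x hx
      have hle1 : π - x ≤ 1 := by linarith [hx.1]
      have hge0 : 0 ≤ π - x := by linarith [hx.2]
      exact neg_nonneg.mpr (Real.log_nonpos hge0 hle1)
  have h2 : IntegrableOn (fun t => Real.log (π - t)) (Set.Ioc (π - 1) π) volume := by
    have h := h1.neg
    simp only [Pi.neg_def, neg_neg] at h
    exact h
  have h3 : IntegrableOn (fun t => Real.log (π - t)) (Set.Icc 0 (π - 1)) volume := by
    apply ContinuousOn.integrableOn_Icc
    apply Real.continuousOn_log.comp (continuous_const.sub continuous_id).continuousOn
    intro x hx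
    simp only [Set.mem_compl_iff, Set.mem_singleton_iff]
    intro h
    have : π - x = 0 := h
    have := hx.2
    linarith
  refine (h3.union h2).mono_set ?_
  intro x hx
  rcases le_or_gt x (π - 1) with h | h
  · exact Or.inl ⟨hx.1.le, h⟩
  · exact Or.inr ⟨h, hx.2.le⟩

lemma integrableOn_log_sin : IntegrableOn (fun t => Real.log (Real.sin t)) (Set.Ioo 0 π) volume := by
  have hpi : 0 < π := Real.pi_pos
  have hgint : IntegrableOn
      (fun t => -Real.log (2 / π ^ 2) - Real.log t - Real.log (π - t)) (Set.Ioo 0 π) volume := by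
    have hc : IntegrableOn (fun _ : ℝ => -Real.log (2 / π ^ 2)) (Set.Ioo 0 π) volume :=
      integrableOn_const (by rw [Real.volume_Ioo]; exact ENNReal.ofReal_ne_top)
    exact (hc.sub integrableOn_log_Ioo).sub integrableOn_log_pi_sub
  apply Integrable.mono' hgint
  · apply ContinuousOn.aestronglyMeasurable _ measurableSet_Ioo
    apply Real.continuousOn_log.comp Real.continuous_sin.continuousOn
    intro x hx
    simp only [Set.mem_compl_iff, Set.mem_singleton_iff]
    exact ne_of_gt (Real.sin_pos_of_pos_of_lt_pi hx.1 hx.2)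
  · rw [MeasureTheory.ae_restrict_iff' measurableSet_Ioo]
    refine MeasureTheory.ae_of_all _ (fun t ht => ?_)
    have ht1 : 0 < t := ht.1
    have ht2 : 0 < π - t := by linarith [ht.2]
    have hs : 0 < Real.sin t := Real.sin_pos_of_pos_of_lt_pi ht.1 ht.2
    have hle : Real.log (Real.sin t) ≤ 0 := Real.log_nonpos hs.le (Real.sin_le_one t)
    rw [Real.norm_eq_abs, abs_of_nonpos hle]
    have hpos : 0 < 2 / π ^ 2 * (t * (π - t)) := by positivity
    have hlog : Real.log (2 / π ^ 2 * (t * (π - t))) ≤ Real.log (Real.sin t) :=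
      Real.log_le_log hpos (sin_lower ht)
    have hexp : Real.log (2 / π ^ 2 * (t * (π - t)))
        = Real.log (2 / π ^ 2) + Real.log t + Real.log (π - t) := by
      rw [Real.log_mul (by positivity) (by positivity),
        Real.log_mul (ne_of_gt ht1) (ne_of_gt ht2)]
      ring
    rw [hexp] at hlog
    linarith

lemma II_of_Ioo {f : ℝ → ℝ} (h : IntegrableOn f (Set.Ioo 0 π) volume) :
    IntervalIntegrable f volume 0 π := by
  constructor
  · have hsing : IntegrableOn f ({π} : Set ℝ) volume := by
      rw [IntegrableOn, Measure.restrict_eq_zero.mpr Real.volume_singleton]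
      exact integrable_zero_measure
    refine (h.union hsing).mono_set fun x hx => ?_
    rcases eq_or_lt_of_le hx.2 with h' | h'
    · exact Or.inr (by simp [h'])
    · exact Or.inl ⟨hx.1, h'⟩
  · rw [Set.Ioc_eq_empty (by linarith [Real.pi_pos] : ¬ π < 0)]
    exact integrableOn_empty

lemma intLogSin : IntervalIntegrable (fun t => Real.log (Real.sin t)) volume 0 π :=
  II_of_Ioo integrableOn_log_sin

lemma intF : IntervalIntegrable (fun t => Real.log |2 * Real.sin t|) volume 0 π := by
  apply II_of_Ioo
  have h2 : IntegrableOn (fun t => Real.log 2 + Real.log (Real.sin t)) (Set.Ioo 0 π) volume := by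
    have hc : IntegrableOn (fun _ : ℝ => Real.log 2) (Set.Ioo 0 π) volume :=
      integrableOn_const (by rw [Real.volume_Ioo]; exact ENNReal.ofReal_ne_top)
    exact hc.add integrableOn_log_sin
  apply h2.congr_fun _ measurableSet_Ioo
  intro x hx
  have hs : 0 < Real.sin x := Real.sin_pos_of_pos_of_lt_pi hx.1 hx.2
  show Real.log 2 + Real.log (Real.sin x) = Real.log |2 * Real.sin x|
  rw [abs_of_pos (by linarith : (0:ℝ) < 2 * Real.sin x),
    Real.log_mul two_ne_zero (ne_of_gt hs)]

lemma ae_ne (c : ℝ) : ∀ᵐ x : ℝ ∂volume, x ≠ c := by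
  refine MeasureTheory.ae_iff.mpr ?_
  have h : {x : ℝ | ¬ x ≠ c} = {c} := by ext x; simp
  rw [h]
  exact Real.volume_singleton

lemma integral_log_sin_pi :
    ∫ t in (0:ℝ)..π, Real.log (Real.sin t) = -(π * Real.log 2) := by
  have hpi : 0 < π := Real.pi_pos
  have hint := intLogSin
  have h01 : IntervalIntegrable (fun t => Real.log (Real.sin t)) volume 0 (π/2) := by
    apply hint.mono_set
    rw [Set.uIcc_of_le (by linarith : (0:ℝ) ≤ π/2), Set.uIcc_of_le hpi.le]
    exact Set.Icc_subset_Icc le_rfl (by linarith)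
  have h12 : IntervalIntegrable (fun t => Real.log (Real.sin t)) volume (π/2) π := by
    apply hint.mono_set
    rw [Set.uIcc_of_le (by linarith : π/2 ≤ π), Set.uIcc_of_le hpi.le]
    exact Set.Icc_subset_Icc (by linarith) le_rfl
  set I : ℝ := ∫ t in (0:ℝ)..(π/2), Real.log (Real.sin t) with hI
  have hsplit : I + ∫ t in (π/2)..π, Real.log (Real.sin t)
      = ∫ t in (0:ℝ)..π, Real.log (Real.sin t) :=
    intervalIntegral.integral_add_adjacent_intervals h01 h12
  have hrefl : ∫ t in (π/2)..π, Real.log (Real.sin t) = I := by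
    have h := intervalIntegral.integral_comp_sub_left
      (a := 0) (b := π/2) (fun t => Real.log (Real.sin t)) π
    simp only [Real.sin_pi_sub] at h
    rw [show π - π/2 = π/2 by ring, show π - (0:ℝ) = π by ring] at h
    exact h.symm
  have h2I : ∫ t in (0:ℝ)..π, Real.log (Real.sin t) = 2 * I := by
    rw [← hsplit, hrefl]; ring
  have hcosI : ∫ t in (0:ℝ)..(π/2), Real.log (Real.cos t) = I := by
    have h := intervalIntegral.integral_comp_sub_left
      (a := 0) (b := π/2) (fun t => Real.log (Real.sin t)) (π/2)
    simp only [Real.sin_pi_div_two_sub] at h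
    rw [show π/2 - π/2 = (0:ℝ) by ring, show π/2 - (0:ℝ) = π/2 by ring] at h
    exact h
  have hcos_int : IntervalIntegrable (fun t => Real.log (Real.cos t)) volume 0 (π/2) := by
    have h := (h01.comp_sub_left (π/2)).symm
    simp only [Real.sin_pi_div_two_sub, sub_zero, sub_self] at h
    exact h
  have hdouble : ∫ t in (0:ℝ)..(π/2), Real.log (Real.sin (2 * t)) = I := by
    have h := intervalIntegral.integral_comp_mul_left
      (a := 0) (b := π/2) (c := 2) (fun t => Real.log (Real.sin t)) two_ne_zero
    rw [h, show (2:ℝ) * 0 = 0 by ring, show (2:ℝ) * (π/2) = π by ring, h2I, smul_eq_mul]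
    ring
  have hexpand : ∫ t in (0:ℝ)..(π/2), Real.log (Real.sin (2 * t))
      = ∫ t in (0:ℝ)..(π/2), (Real.log 2 + Real.log (Real.sin t) + Real.log (Real.cos t)) := by
    apply intervalIntegral.integral_congr_ae
    filter_upwards [ae_ne (π/2)] with x hx hxmem
    rw [Set.uIoc_of_le (by linarith : (0:ℝ) ≤ π/2)] at hxmem
    have hx1 : 0 < x := hxmem.1
    have hx2 : x < π/2 := lt_of_le_of_ne hxmem.2 hx
    have hs : 0 < Real.sin x := Real.sin_pos_of_pos_of_lt_pi hx1 (by linarith)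
    have hc : 0 < Real.cos x := Real.cos_pos_of_mem_Ioo ⟨by linarith, hx2⟩
    rw [Real.sin_two_mul, Real.log_mul (mul_ne_zero two_ne_zero (ne_of_gt hs)) (ne_of_gt hc),
      Real.log_mul two_ne_zero (ne_of_gt hs)]
  have hsum : ∫ t in (0:ℝ)..(π/2), (Real.log 2 + Real.log (Real.sin t) + Real.log (Real.cos t))
      = π/2 * Real.log 2 + I + I := by
    rw [intervalIntegral.integral_add (intervalIntegrable_const.add h01) hcos_int,
      intervalIntegral.integral_add intervalIntegrable_const h01,
      intervalIntegral.integral_const, hcosI, smul_eq_mul]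
    ring
  have hIeq : I = π/2 * Real.log 2 + I + I := by
    rw [← hsum, ← hexpand, hdouble]
  have hIval : I = -(π/2 * Real.log 2) := by linarith
  rw [h2I, hIval]; ring

lemma integral_F_pi : ∫ t in (0:ℝ)..π, Real.log |2 * Real.sin t| = 0 := by
  have hpi : 0 < π := Real.pi_pos
  have hcongr : ∫ t in (0:ℝ)..π, Real.log |2 * Real.sin t|
      = ∫ t in (0:ℝ)..π, (Real.log 2 + Real.log (Real.sin t)) := by
    apply intervalIntegral.integral_congr_ae
    filter_upwards [ae_ne π] with x hx hxmem
    rw [Set.uIoc_of_le hpi.le] at hxmem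
    have hx2 : x < π := lt_of_le_of_ne hxmem.2 hx
    have hs : 0 < Real.sin x := Real.sin_pos_of_pos_of_lt_pi hxmem.1 hx2
    rw [abs_of_pos (by linarith : (0:ℝ) < 2 * Real.sin x),
      Real.log_mul two_ne_zero (ne_of_gt hs)]
  rw [hcongr, intervalIntegral.integral_add intervalIntegrable_const intLogSin,
    integral_log_sin_pi, intervalIntegral.integral_const, smul_eq_mul]
  ring

lemma F_nonpos_left {t : ℝ} (ht : t ∈ Set.Icc (0:ℝ) (π/6)) :
    Real.log |2 * Real.sin t| ≤ 0 := by
  have hpi : 0 < π := Real.pi_pos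
  have h1 : Real.sin t ≤ 1/2 := by
    rw [← Real.sin_pi_div_six]
    exact Real.sin_le_sin_of_le_of_le_pi_div_two (by linarith [ht.1]) (by linarith) ht.2
  have h0 : 0 ≤ Real.sin t := Real.sin_nonneg_of_nonneg_of_le_pi ht.1 (by linarith [ht.2])
  apply Real.log_nonpos (abs_nonneg _)
  rw [abs_of_nonneg (by linarith : (0:ℝ) ≤ 2 * Real.sin t)]
  linarith

lemma F_nonneg_mid {t : ℝ} (ht : t ∈ Set.Icc (π/6) (5*π/6)) :
    0 ≤ Real.log |2 * Real.sin t| := by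
  have hpi : 0 < π := Real.pi_pos
  have h1 : 1/2 ≤ Real.sin t := by
    rcases le_total t (π/2) with h | h
    · rw [← Real.sin_pi_div_six]
      exact Real.sin_le_sin_of_le_of_le_pi_div_two (by linarith) h ht.1
    · rw [← Real.sin_pi_sub t, ← Real.sin_pi_div_six]
      exact Real.sin_le_sin_of_le_of_le_pi_div_two (by linarith) (by linarith) (by linarith [ht.2])
  apply Real.log_nonneg
  calc (1:ℝ) ≤ 2 * Real.sin t := by linarith
    _ ≤ |2 * Real.sin t| := le_abs_self _

lemma F_nonpos_right {t : ℝ} (ht : t ∈ Set.Icc (5*π/6) π) :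
    Real.log |2 * Real.sin t| ≤ 0 := by
  have hpi : 0 < π := Real.pi_pos
  have h1 : Real.sin t ≤ 1/2 := by
    rw [← Real.sin_pi_sub t, ← Real.sin_pi_div_six]
    exact Real.sin_le_sin_of_le_of_le_pi_div_two (by linarith [ht.2]) (by linarith)
      (by linarith [ht.1])
  have h0 : 0 ≤ Real.sin t := Real.sin_nonneg_of_nonneg_of_le_pi (by linarith [ht.1]) ht.2
  apply Real.log_nonpos (abs_nonneg _)
  rw [abs_of_nonneg (by linarith : (0:ℝ) ≤ 2 * Real.sin t)]
  linarith

lemma integral_nonpos' {f : ℝ → ℝ} {a b : ℝ} (hab : a ≤ b)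
    (h : ∀ u ∈ Set.Icc a b, f u ≤ 0) : ∫ u in a..b, f u ≤ 0 := by
  have h2 := intervalIntegral.integral_nonneg (μ := volume) (f := fun u => -f u) hab
    (fun u hu => neg_nonneg.mpr (h u hu))
  rw [intervalIntegral.integral_neg] at h2
  linarith

end LobachevskyAux

open LobachevskyAux in
/-- `Λ` attains its maximum over `[0, π]` at `π/6`. -/
theorem lobachevsky_max_on_Icc :
    ∀ x ∈ Set.Icc (0:ℝ) Real.pi, lobachevsky x ≤ lobachevsky (Real.pi / 6) := by
  intro x hx
  have hpi : 0 < π := Real.pi_pos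
  have mono : ∀ a b : ℝ, 0 ≤ a → a ≤ b → b ≤ π →
      IntervalIntegrable (fun t => Real.log |2 * Real.sin t|) volume a b := by
    intro a b ha hab hb
    apply intF.mono_set
    rw [Set.uIcc_of_le hab, Set.uIcc_of_le hpi.le]
    exact Set.Icc_subset_Icc ha hb
  simp only [lobachevsky, neg_le_neg_iff]
  rcases le_total x (π/6) with h1 | h1
  · have key := intervalIntegral.integral_add_adjacent_intervals
      (mono 0 x le_rfl hx.1 hx.2) (mono x (π/6) hx.1 h1 (by linarith))
    have hnp : ∫ t in x..(π/6), Real.log |2 * Real.sin t| ≤ 0 :=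
      integral_nonpos' h1 (fun u hu => F_nonpos_left ⟨le_trans hx.1 hu.1, hu.2⟩)
    linarith
  · rcases le_total x (5*π/6) with h2 | h2
    · have key := intervalIntegral.integral_add_adjacent_intervals
        (mono 0 (π/6) le_rfl (by linarith) (by linarith)) (mono (π/6) x (by linarith) h1 hx.2)
      have hnn : 0 ≤ ∫ t in (π/6)..x, Real.log |2 * Real.sin t| :=
        intervalIntegral.integral_nonneg h1 (fun u hu => F_nonneg_mid ⟨hu.1, le_trans hu.2 h2⟩)
      linarith
    · have key := intervalIntegral.integral_add_adjacent_intervals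
        (mono 0 x le_rfl hx.1 hx.2) (mono x π hx.1 hx.2 le_rfl)
      rw [integral_F_pi] at key
      have hnp : ∫ t in x..π, Real.log |2 * Real.sin t| ≤ 0 :=
        integral_nonpos' hx.2 (fun u hu => F_nonpos_right ⟨le_trans h2 hu.1, hu.2⟩)
      have hnp2 : ∫ t in (0:ℝ)..(π/6), Real.log |2 * Real.sin t| ≤ 0 :=
        integral_nonpos' (by linarith) (fun u hu => F_nonpos_left hu)
      linarith
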